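/- The universal process dominates the price: for every stopping time τ ∈ T_{0,N} (in particular for every deterministic time t ∈ {0,...,N}), K_τ ≥ P_τ a.s. -/

import Mathlib

open MeasureTheory Filter

/-- Running maximum `max_{t ≤ v ≤ u} L v ω` (intended for `t ≤ u`). -/
noncomputable def runMax {Ω : Type*} (L : ℕ → Ω → ℝ) (t u : ℕ) (ω : Ω) : ℝ :=
  (Finset.Icc t u).fold max (L t ω) fun v => L v ω

/-- Running minimum `min_{t ≤ v ≤ u} K v ω` (intended for `t ≤ u`). -/
noncomputable def runMin {Ω : Type*} (K : ℕ → Ω → ℝ) (t u : ℕ) (ω : Ω) : ℝ :=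
  (Finset.Icc t u).fold min (K t ω) fun v => K v ω

/-- A discrete-time nonlinear expectation on the horizon `{0, ..., N}`:
a family of maps `E t` sending square-integrable `F N`-measurable random
variables to square-integrable `F t`-measurable random variables, satisfying
monotonicity, strict monotonicity, translation invariance, the tower property,
the zero-one law and monotone convergence. -/
structure NLExp {Ω : Type*} {m0 : MeasurableSpace Ω} (μ : Measure Ω)
    (F : Filtration ℕ m0) (N : ℕ) where
  E : ℕ → (Ω → ℝ) → Ω → ℝ
  adapted : ∀ t, t ≤ N → ∀ ξ : Ω → ℝ, StronglyMeasurable[F N] ξ → MemLp ξ 2 μ →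
    StronglyMeasurable[F t] (E t ξ)
  sqInt : ∀ t, t ≤ N → ∀ ξ : Ω → ℝ, StronglyMeasurable[F N] ξ → MemLp ξ 2 μ →
    MemLp (E t ξ) 2 μ
  mono : ∀ t, t ≤ N → ∀ ξ η : Ω → ℝ, StronglyMeasurable[F N] ξ → MemLp ξ 2 μ →
    StronglyMeasurable[F N] η → MemLp η 2 μ → ξ ≤ᵐ[μ] η → E t ξ ≤ᵐ[μ] E t η
  strictMono : ∀ t, t ≤ N → ∀ ξ η : Ω → ℝ, StronglyMeasurable[F N] ξ → MemLp ξ 2 μ →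
    StronglyMeasurable[F N] η → MemLp η 2 μ → ξ ≤ᵐ[μ] η →
    0 < μ {ω | ξ ω < η ω} → 0 < μ {ω | E t ξ ω < E t η ω}
  translation : ∀ t, t ≤ N → ∀ ξ ζ : Ω → ℝ, StronglyMeasurable[F N] ξ → MemLp ξ 2 μ →
    StronglyMeasurable[F t] ζ → MemLp ζ 2 μ → E t (ξ + ζ) =ᵐ[μ] E t ξ + ζ
  tower : ∀ s t, s ≤ t → t ≤ N → ∀ ξ : Ω → ℝ, StronglyMeasurable[F N] ξ → MemLp ξ 2 μ →
    E s (E t ξ) =ᵐ[μ] E s ξ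
  zeroOne : ∀ t, t ≤ N → ∀ ξ η : Ω → ℝ, StronglyMeasurable[F N] ξ → MemLp ξ 2 μ →
    StronglyMeasurable[F N] η → MemLp η 2 μ → ∀ A : Set Ω, MeasurableSet[F t] A →
    E t (A.indicator ξ + Aᶜ.indicator η) =ᵐ[μ]
      A.indicator (E t ξ) + Aᶜ.indicator (E t η)
  monoConv : ∀ t, t ≤ N → ∀ (ξs : ℕ → Ω → ℝ) (ξ : Ω → ℝ),
    (∀ n, StronglyMeasurable[F N] (ξs n)) → (∀ n, MemLp (ξs n) 2 μ) →
    StronglyMeasurable[F N] ξ → MemLp ξ 2 μ →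
    (∀ᵐ ω ∂μ, (Monotone fun n => ξs n ω) ∨ (Antitone fun n => ξs n ω)) →
    (∀ᵐ ω ∂μ, Tendsto (fun n => ξs n ω) atTop (nhds (ξ ω))) →
    ∀ᵐ ω ∂μ, Tendsto (fun n => E t (ξs n) ω) atTop (nhds (E t ξ ω))


section AuxLemmas

variable {Ω : Type*}

lemma runMax_self (L : ℕ → Ω → ℝ) (t : ℕ) (ω : Ω) : runMax L t t ω = L t ω := by
  simp [runMax]

lemma runMax_succ (L : ℕ → Ω → ℝ) {t u : ℕ} (h : t ≤ u) (ω : Ω) :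
    runMax L t (u + 1) ω = max (L (u + 1) ω) (runMax L t u ω) := by
  rw [runMax, runMax, ← Finset.insert_Icc_right_eq_Icc_add_one (h.trans (Nat.le_succ u)),
    Finset.fold_insert (by simp)]

lemma le_runMax (L : ℕ → Ω → ℝ) {t u : ℕ} (h : t ≤ u) (ω : Ω) :
    L t ω ≤ runMax L t u ω := by
  induction u, h using Nat.le_induction with
  | base => simp [runMax_self]
  | succ u hu ih => rw [runMax_succ L hu]; exact ih.trans (le_max_right _ _)

lemma runMax_stronglyMeasurable {m : MeasurableSpace Ω} (L : ℕ → Ω → ℝ) {t u : ℕ}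
    (h : t ≤ u) (hL : ∀ v, t ≤ v → v ≤ u → StronglyMeasurable[m] (L v)) :
    StronglyMeasurable[m] (runMax L t u) := by
  induction u, h using Nat.le_induction with
  | base =>
    have : runMax L t t = L t := funext fun ω => runMax_self L t ω
    rw [this]; exact hL t le_rfl le_rfl
  | succ u hu ih =>
    have heq : runMax L t (u + 1) = fun ω => max (L (u + 1) ω) (runMax L t u ω) :=
      funext fun ω => runMax_succ L hu ω
    rw [heq]
    exact (hL (u + 1) (hu.trans (Nat.le_succ u)) le_rfl).sup
      (ih fun v hv hvu => hL v hv (hvu.trans (Nat.le_succ u)))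

lemma runMax_memℒp {m0 : MeasurableSpace Ω} {μ : Measure Ω} (L : ℕ → Ω → ℝ) {t u : ℕ}
    (h : t ≤ u) (hL : ∀ v, t ≤ v → v ≤ u → MemLp (L v) 2 μ) :
    MemLp (runMax L t u) 2 μ := by
  induction u, h using Nat.le_induction with
  | base =>
    have : runMax L t t = L t := funext fun ω => runMax_self L t ω
    rw [this]; exact hL t le_rfl le_rfl
  | succ u hu ih =>
    have heq : runMax L t (u + 1) = (L (u + 1)) ⊔ (runMax L t u) :=
      funext fun ω => runMax_succ L hu ω
    rw [heq]
    exact (hL (u + 1) (hu.trans (Nat.le_succ u)) le_rfl).sup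
      (ih fun v hv hvu => hL v hv (hvu.trans (Nat.le_succ u)))

lemma geom_tail_sum {r : ℝ} (hr : 0 < r) {t n : ℕ} (h : t ≤ n) :
    ∑ u ∈ Finset.Ico t n, r / (1 + r) * ((1 + r) ^ u)⁻¹
      = ((1 + r) ^ t)⁻¹ - ((1 + r) ^ n)⁻¹ := by
  have h1 : (1 : ℝ) + r ≠ 0 := by positivity
  induction n, h using Nat.le_induction with
  | base => simp
  | succ n hn ih =>
    rw [Finset.sum_Ico_succ_top hn, ih, pow_succ]
    field_simp
    ring

end AuxLemmas

/-- **The universal process dominates the price.** For every stopping time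
`τ ∈ T_{0,N}` (in particular every deterministic time), `K_τ ≥ P_τ` a.s. -/
theorem universal_process_dominates_price
{Ω : Type*} [TopologicalSpace Ω] [PolishSpace Ω]
    [m0 : MeasurableSpace Ω] [BorelSpace Ω]
    (μ : Measure Ω) [IsProbabilityMeasure μ]
    (F : Filtration ℕ m0) (N : ℕ) (hN : 1 ≤ N)
    (EE : NLExp μ F N)
    (r : ℝ) (hr : 0 < r)
    (S : ℕ → Ω → ℝ)
    (hS_adapted : ∀ t, t ≤ N → StronglyMeasurable[F t] (S t))
    (hS_sqInt : ∀ t, t ≤ N → MemLp (fun ω => ((1 + r) ^ t)⁻¹ * S t ω) 2 μ)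
(K : ℕ → Ω → ℝ)
    (hK_adapted : ∀ t, t ≤ N → StronglyMeasurable[F t] (K t))
    (hK_sqInt : ∀ t, t ≤ N → MemLp (K t) 2 μ)
    (hK_rep : ∀ t, t ≤ N →
      (fun ω => -(((1 + r) ^ t)⁻¹ * S t ω)) =ᵐ[μ] EE.E t fun ω =>
        (∑ u ∈ Finset.Ico t N,
          r / (1 + r) * ((1 + r) ^ u)⁻¹ * runMax (fun v ω' => -K v ω') t u ω)
        + ((1 + r) ^ N)⁻¹ * runMax (fun v ω' => -K v ω') t N ω) :
    ∀ τ : Ω → ℕ, IsStoppingTime F (fun ω => (τ ω : WithTop ℕ)) → (∀ ω, τ ω ≤ N) →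
      ∀ᵐ ω ∂μ, S (τ ω) ω ≤ K (τ ω) ω := by
  have hrpos : (0 : ℝ) < 1 + r := by linarith
  have h0meas : StronglyMeasurable[F N] (0 : Ω → ℝ) := stronglyMeasurable_const
  have h0L2 : MemLp (0 : Ω → ℝ) 2 μ := by simpa using memLp_const (0 : ℝ)
  -- E t 0 = 0 a.e.
  have hE0 : ∀ t, t ≤ N → EE.E t 0 =ᵐ[μ] 0 := by
    intro t ht
    have hZm : StronglyMeasurable[F t] (EE.E t 0) := EE.adapted t ht 0 h0meas h0L2
    have hZ2 : MemLp (EE.E t 0) 2 μ := EE.sqInt t ht 0 h0meas h0L2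
    have htr := EE.translation t ht 0 (EE.E t 0) h0meas h0L2 hZm hZ2
    have htow := EE.tower t t le_rfl ht 0 h0meas h0L2
    rw [zero_add] at htr
    filter_upwards [htr, htow] with ω h1 h2
    simp only [Pi.add_apply, Pi.zero_apply] at h1 h2 ⊢
    linarith [h1, h2]
  -- main claim per deterministic time
  have key : ∀ t, t ≤ N → ∀ᵐ ω ∂μ, S t ω ≤ K t ω := by
    intro t ht
    have hK' := hK_rep t ht
    set L : ℕ → Ω → ℝ := fun v ω' => -K v ω' with hLdef
    set ξ : Ω → ℝ := fun ω =>
      (∑ u ∈ Finset.Ico t N, r / (1 + r) * ((1 + r) ^ u)⁻¹ * runMax L t u ω)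
      + ((1 + r) ^ N)⁻¹ * runMax L t N ω with hξdef
    have hLm : ∀ v, v ≤ N → StronglyMeasurable[F N] (L v) := fun v hv =>
      ((hK_adapted v hv).mono (F.mono hv)).neg
    have hL2 : ∀ v, v ≤ N → MemLp (L v) 2 μ := fun v hv => (hK_sqInt v hv).neg
    have hRMm : ∀ u, t ≤ u → u ≤ N → StronglyMeasurable[F N] (runMax L t u) :=
      fun u htu huN => runMax_stronglyMeasurable L htu
        (fun v hv hvu => hLm v (hvu.trans huN))
    have hRM2 : ∀ u, t ≤ u → u ≤ N → MemLp (runMax L t u) 2 μ :=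
      fun u htu huN => runMax_memℒp L htu (fun v hv hvu => hL2 v (hvu.trans huN))
    have hξm : StronglyMeasurable[F N] ξ := by
      rw [hξdef]
      apply StronglyMeasurable.add
      · apply Finset.stronglyMeasurable_fun_sum
        intro u hu
        rcases Finset.mem_Ico.1 hu with ⟨h1, h2⟩
        exact (hRMm u h1 h2.le).const_mul _
      · exact (hRMm N ht le_rfl).const_mul _
    have hξ2 : MemLp ξ 2 μ := by
      rw [hξdef]
      apply MemLp.add
      · apply memLp_finset_sum
        intro u hu
        rcases Finset.mem_Ico.1 hu with ⟨h1, h2⟩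
        exact (hRM2 u h1 h2.le).const_mul _
      · exact (hRM2 N ht le_rfl).const_mul _
    set ζ : Ω → ℝ := fun ω => ((1 + r) ^ t)⁻¹ * L t ω with hζdef
    have hζmt : StronglyMeasurable[F t] ζ := ((hK_adapted t ht).neg).const_mul _
    have hζmN : StronglyMeasurable[F N] ζ := hζmt.mono (F.mono ht)
    have hζ2 : MemLp ζ 2 μ := ((hK_sqInt t ht).neg).const_mul _
    have hle : ζ ≤ᵐ[μ] ξ := by
      apply Filter.Eventually.of_forall
      intro ω
      have hsum := geom_tail_sum hr ht
      have h1 : ζ ω = (∑ u ∈ Finset.Ico t N,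
          r / (1 + r) * ((1 + r) ^ u)⁻¹ * L t ω) + ((1 + r) ^ N)⁻¹ * L t ω := by
        rw [← Finset.sum_mul, hsum, hζdef]
        ring
      rw [h1, hξdef]
      apply add_le_add
      · apply Finset.sum_le_sum
        intro u hu
        rcases Finset.mem_Ico.1 hu with ⟨h1u, _⟩
        have hpos : (0 : ℝ) ≤ r / (1 + r) * ((1 + r) ^ u)⁻¹ := by positivity
        exact mul_le_mul_of_nonneg_left (le_runMax L h1u ω) hpos
      · exact mul_le_mul_of_nonneg_left (le_runMax L ht ω) (by positivity)
    have hmono := EE.mono t ht ζ ξ hζmN hζ2 hξm hξ2 hle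
    have htr := EE.translation t ht 0 ζ h0meas h0L2 hζmt hζ2
    rw [zero_add] at htr
    have hEζ : EE.E t ζ =ᵐ[μ] ζ := by
      filter_upwards [htr, hE0 t ht] with ω ha hb
      simp only [Pi.add_apply, Pi.zero_apply] at ha hb
      rw [ha, hb, zero_add]
    filter_upwards [hmono, hEζ, hK'] with ω h1 h2 h3
    have h4 : ζ ω ≤ -(((1 + r) ^ t)⁻¹ * S t ω) := by
      rw [← h2, h3]; exact h1
    have hapos : (0 : ℝ) < ((1 + r) ^ t)⁻¹ := by positivity
    have h5 : ((1 + r) ^ t)⁻¹ * S t ω ≤ ((1 + r) ^ t)⁻¹ * K t ω := by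
      have : ζ ω = ((1 + r) ^ t)⁻¹ * (-K t ω) := rfl
      rw [this] at h4
      nlinarith
    exact le_of_mul_le_mul_left h5 hapos
  have hall : ∀ᵐ ω ∂μ, ∀ t, t ≤ N → S t ω ≤ K t ω := by
    rw [MeasureTheory.ae_all_iff]
    intro t
    by_cases ht : t ≤ N
    · filter_upwards [key t ht] with ω h _
      exact h
    · filter_upwards with ω h
      exact absurd h ht
  intro τ hτ hτN
  filter_upwards [hall] with ω h
  exact h (τ ω) (hτN ω)
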